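/- Let D be a finite set of forbidden patterns such that every pattern in D contains at least two nonzero symbols. Then cap(D) > 0. -/

import Mathlib

/-- The integer value of a binary symbol. -/
def boolToInt (b : Bool) : ℤ := if b then 1 else 0

/-- Componentwise difference of two binary words, a word over `{-1, 0, +1}`. -/
def diffWord (u v : List Bool) : List ℤ :=
  List.zipWith (fun a b => boolToInt a - boolToInt b) u v

/-- A forbidden pattern: a nonempty finite word over the alphabet `{-1, 0, +1}`. -/
def IsPattern (p : List ℤ) : Prop :=
  p ≠ [] ∧ ∀ x ∈ p, x = -1 ∨ x = 0 ∨ x = 1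

/-- A code `C` of binary words avoids the forbidden set `D` if no difference of two
distinct code words contains a pattern of `D` as a contiguous subword (factor). -/
def AvoidsCode (D : Finset (List ℤ)) (C : Finset (List Bool)) : Prop :=
  ∀ u ∈ C, ∀ v ∈ C, u ≠ v → ∀ p ∈ D, ¬ p <:+: diffWord u v

/-- `delta D n` : the maximal cardinality of a code of binary words of length `n`
avoiding the forbidden set `D`. -/
noncomputable def delta (D : Finset (List ℤ)) (n : ℕ) : ℕ :=
  sSup {k : ℕ | ∃ C : Finset (List Bool),
    (∀ u ∈ C, u.length = n) ∧ AvoidsCode D C ∧ C.card = k}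

/-- The capacity of a set of forbidden difference patterns. -/
noncomputable def cap (D : Finset (List ℤ)) : ℝ :=
  Filter.limsup (fun n : ℕ => Real.logb 2 (delta D n) / n) Filter.atTop

/-! ### Auxiliary constructions -/


/-- "blocky" integer words: each value followed by `L` zeros. -/
def blocksW (L : ℕ) (ds : List ℤ) : List ℤ := (ds.map (fun d => d :: List.replicate L (0:ℤ))).flatten

/-- encoding of a bit string: each bit followed by `L` zeros (`false`s). -/
def gword (L : ℕ) (l : List Bool) : List Bool := (l.map (fun b => b :: List.replicate L false)).flatten

lemma blocksW_cons (L : ℕ) (d : ℤ) (ds : List ℤ) :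
    blocksW L (d :: ds) = d :: (List.replicate L (0:ℤ) ++ blocksW L ds) := by
  simp [blocksW]

lemma gword_cons (L : ℕ) (a : Bool) (l : List Bool) :
    gword L (a :: l) = a :: (List.replicate L false ++ gword L l) := by
  simp [gword]

lemma gword_length (L : ℕ) (l : List Bool) : (gword L l).length = l.length * (L + 1) := by
  induction l with
  | nil => simp [gword]
  | cons a l ih => rw [gword_cons]; simp [ih]; ring

lemma gword_injective (L : ℕ) : Function.Injective (gword L) := by
  intro l l' h
  induction l generalizing l' with
  | nil =>
    cases l' with
    | nil => rfl
    | cons b l' => simp [gword, gword_cons] at h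
  | cons a l ih =>
    cases l' with
    | nil => simp [gword, gword_cons] at h
    | cons b l' =>
      rw [gword_cons, gword_cons] at h
      simp only [List.cons.injEq, List.append_cancel_left_eq] at h
      exact by rw [h.1, ih h.2]

lemma zipWith_replicate_self {α γ : Type*} (f : α → α → γ) (L : ℕ) (x : α) :
    List.zipWith f (List.replicate L x) (List.replicate L x) = List.replicate L (f x x) := by
  induction L with
  | zero => rfl
  | succ n ih => simp [List.replicate_succ, ih]

lemma diff_gword (L : ℕ) (u v : List Bool) :
    diffWord (gword L u) (gword L v)
      = blocksW L (List.zipWith (fun a b => boolToInt a - boolToInt b) u v) := by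
  induction u generalizing v with
  | nil => simp [gword, diffWord, blocksW]
  | cons a u ih =>
    cases v with
    | nil => simp [gword, diffWord, blocksW]
    | cons b v =>
      rw [gword_cons, gword_cons]
      show List.zipWith _ (a :: (List.replicate L false ++ gword L u))
          (b :: (List.replicate L false ++ gword L v)) = _
      rw [List.zipWith_cons_cons,
        List.zipWith_append (by simp),
        zipWith_replicate_self]
      have h3 := ih v
      simp only [diffWord] at h3
      rw [List.zipWith_cons_cons, blocksW_cons, h3]
      simp [boolToInt]

/-- Key combinatorial lemma: in a word that is `m` zeros followed by a blocky word,
any factor of length at most `L` contains at most one nonzero symbol. -/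
lemma key_lemma (L : ℕ) (ds : List ℤ) : ∀ m : ℕ, ∀ q : List ℤ,
    q <:+: (List.replicate m (0:ℤ) ++ blocksW L ds) → q.length ≤ L →
    (q.filter (fun x => x ≠ 0)).length ≤ 1 := by
  induction ds with
  | nil =>
    intro m q hq _
    have hz : ∀ x ∈ q, x = (0:ℤ) := by
      intro x hx
      have := hq.subset hx
      simp [blocksW, List.mem_replicate] at this
      exact this.2
    have hfil : q.filter (fun x => x ≠ 0) = [] := by
      rw [List.filter_eq_nil_iff]
      intro a ha; simp [hz a ha]
    rw [hfil]
    simp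
  | cons d ds ih =>
    intro m
    induction m with
    | zero =>
      intro q hq hlen
      rw [List.replicate_zero, List.nil_append, blocksW_cons] at hq
      rcases List.infix_cons_iff.mp hq with hpre | hinf
      · cases q with
        | nil => simp
        | cons a q' =>
          obtain ⟨had, hq'⟩ := List.cons_prefix_cons.mp hpre
          -- q' is a prefix of replicate L 0 ++ blocksW L ds of length < L
          have hl' : q'.length ≤ L := by simpa using Nat.le_of_succ_le hlen
          have : q' = List.replicate q'.length (0:ℤ) := by
            have := List.prefix_iff_eq_take.mp hq'
            rwa [List.take_append_of_le_length (by simpa using hl'),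
              List.take_replicate, Nat.min_eq_left hl'] at this
          rw [this]
          by_cases hd : a = 0 <;> simp [hd, List.filter_replicate]
      · exact ih L q hinf hlen
    | succ m ihm =>
      intro q hq hlen
      rw [List.replicate_succ, List.cons_append] at hq
      rcases List.infix_cons_iff.mp hq with hpre | hinf
      · cases q with
        | nil => simp
        | cons a q' =>
          obtain ⟨had, hq'⟩ := List.cons_prefix_cons.mp hpre
          have := ihm q' hq'.isInfix (Nat.le_of_succ_le hlen)
          simpa [had] using this
      · exact ihm q hinf hlen

lemma card_le_two_pow (n : ℕ) (C : Finset (List Bool)) (h : ∀ u ∈ C, u.length = n) :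
    C.card ≤ 2 ^ n := by
  have hsub : C ⊆ Finset.image (fun f : Fin n → Bool => List.ofFn f) Finset.univ := by
    intro u hu
    have hn := h u hu
    subst hn
    exact Finset.mem_image.mpr ⟨u.get, Finset.mem_univ _, List.ofFn_get u⟩
  calc C.card ≤ _ := Finset.card_le_card hsub
    _ ≤ (Finset.univ : Finset (Fin n → Bool)).card := Finset.card_image_le
    _ = 2 ^ n := by simp

lemma delta_le_two_pow (D : Finset (List ℤ)) (n : ℕ) : delta D n ≤ 2 ^ n := by
  apply csSup_le'
  rintro k ⟨C, hlen, _, rfl⟩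
  exact card_le_two_pow n C hlen

/-- The code of all blocky words from `k` free bits. -/
noncomputable def codeC (L k : ℕ) : Finset (List Bool) :=
  Finset.image (fun f : Fin k → Bool => gword L (List.ofFn f)) Finset.univ

lemma codeC_card (L k : ℕ) : (codeC L k).card = 2 ^ k := by
  rw [codeC, Finset.card_image_of_injective _
    (fun f g h => List.ofFn_injective (gword_injective L h))]
  simp

lemma codeC_length (L k : ℕ) : ∀ u ∈ codeC L k, u.length = k * (L + 1) := by
  intro u hu
  obtain ⟨f, _, rfl⟩ := Finset.mem_image.mp hu
  rw [gword_length]; simp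

lemma codeC_avoids (D : Finset (List ℤ)) (L : ℕ)
    (hL : ∀ p ∈ D, p.length ≤ L)
    (h2 : ∀ p ∈ D, 2 ≤ (p.filter (fun x => x ≠ 0)).length) (k : ℕ) :
    AvoidsCode D (codeC L k) := by
  intro u hu v hv _ p hp hinf
  obtain ⟨f, _, rfl⟩ := Finset.mem_image.mp hu
  obtain ⟨g, _, rfl⟩ := Finset.mem_image.mp hv
  rw [diff_gword] at hinf
  have hinf' : p <:+: (List.replicate 0 (0:ℤ) ++ blocksW L
      (List.zipWith (fun a b => boolToInt a - boolToInt b) (List.ofFn f) (List.ofFn g))) := by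
    simpa using hinf
  have h1 := key_lemma L _ 0 p hinf' (hL p hp)
  have := h2 p hp
  omega

lemma two_pow_le_delta (D : Finset (List ℤ)) (L : ℕ)
    (hL : ∀ p ∈ D, p.length ≤ L)
    (h2 : ∀ p ∈ D, 2 ≤ (p.filter (fun x => x ≠ 0)).length) (k : ℕ) :
    2 ^ k ≤ delta D (k * (L + 1)) := by
  apply le_csSup
  · exact ⟨2 ^ (k * (L + 1)), fun j ⟨C, hlen, _, hcard⟩ =>
      hcard ▸ card_le_two_pow _ C hlen⟩
  · exact ⟨codeC L k, codeC_length L k, codeC_avoids D L hL h2 k, codeC_card L k⟩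

/-- if every pattern in `D` contains at least two nonzero symbols,
then `cap(D) > 0`. -/
theorem positive_capacity_of_two_nonzeros (D : Finset (List ℤ))
    (hD : ∀ p ∈ D, IsPattern p)
    (h2 : ∀ p ∈ D, 2 ≤ (p.filter (fun x => x ≠ 0)).length) :
    0 < cap D := by
  set L : ℕ := D.sup List.length with hLdef
  have hL : ∀ p ∈ D, p.length ≤ L := fun p hp => Finset.le_sup hp
  set c : ℝ := 1 / (L + 1) with hc
  have hcpos : 0 < c := by positivity
  have hub : ∀ n : ℕ, Real.logb 2 (delta D n) / n ≤ 1 := by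
    intro n
    rcases Nat.eq_zero_or_pos n with rfl | hn
    · simp
    rcases Nat.eq_zero_or_pos (delta D n) with hz | hpos
    · simp [hz]
    have h1 : Real.logb 2 (delta D n) ≤ Real.logb 2 ((2:ℝ) ^ n) := by
      apply Real.logb_le_logb_of_le (by norm_num) (by exact_mod_cast hpos)
      have := delta_le_two_pow D n
      exact_mod_cast this
    rw [Real.logb_pow, Real.logb_self_eq_one (by norm_num)] at h1
    rw [div_le_one (by exact_mod_cast hn)]
    simpa using h1
  have hbdd : Filter.IsBoundedUnder (· ≤ ·) Filter.atTop
      (fun n : ℕ => Real.logb 2 (delta D n) / n) :=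
    Filter.isBoundedUnder_of ⟨1, hub⟩
  have hfreq : ∃ᶠ n in Filter.atTop, c ≤ Real.logb 2 (delta D n) / n := by
    rw [Filter.frequently_atTop]
    intro N
    refine ⟨(N + 1) * (L + 1), ?_, ?_⟩
    · calc N ≤ N + 1 := Nat.le_succ N
        _ ≤ (N + 1) * (L + 1) := Nat.le_mul_of_pos_right _ (Nat.succ_pos L)
    · set k := N + 1
      have hk : (0:ℝ) < k := by positivity
      have hdp := two_pow_le_delta D L hL h2 k
      have hlog : (k : ℝ) ≤ Real.logb 2 (delta D (k * (L + 1))) := by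
        have h1 : Real.logb 2 ((2:ℝ) ^ k) ≤ Real.logb 2 (delta D (k * (L + 1))) := by
          apply Real.logb_le_logb_of_le (by norm_num) (by positivity)
          exact_mod_cast hdp
        rwa [Real.logb_pow, Real.logb_self_eq_one (by norm_num), mul_one] at h1
      have hnpos : (0:ℝ) < ((k * (L + 1) : ℕ) : ℝ) := by positivity
      rw [le_div_iff₀ hnpos]
      calc c * ((k * (L + 1) : ℕ) : ℝ) = (k : ℝ) := by
            push_cast [hc]; field_simp
        _ ≤ _ := hlog
  have := Filter.le_limsup_of_frequently_le hfreq hbdd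
  exact lt_of_lt_of_le hcpos this
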